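/- arXiv:2207.01319 — 2 statements merged into one kernel-verified Lean document; each statement's English description precedes it below -/
import Mathlib

section
/- Connection between evaluation types: for any a ∈ F_{q^m}, nonzero b ∈ F_{q^m}, and f ∈ F_{q^m}[x;σ] (zero derivation), f[ D_a(b)·b^{-1} ]·b = f(b)_a, where f[·] denotes remainder evaluation and f(·)_a generalized operator evaluation with D_a(b) = σ(b)a. -/
open Polynomial

noncomputable section

variable {F : Type*} [Field F]

/-- Left multiplication by `x` in the skew polynomial ring `F[x;σ,δ]`,
acting on polynomials viewed as coefficient sequences:
`x ⬝ (∑ fₙ xⁿ) = ∑ σ(fₙ) x^{n+1} + ∑ δ(fₙ) xⁿ`. -/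
def skewXMul (σ : F →+* F) (δ : F → F) (f : F[X]) : F[X] :=
  f.map σ * X + f.sum fun n c => C (δ c) * X ^ n

/-- Multiplication in the skew polynomial ring `F[x;σ,δ]` (with rule `x·a = σ(a)x + δ(a)`),
where polynomials are represented by their coefficient sequences. -/
def skewMul (σ : F →+* F) (δ : F → F) (f g : F[X]) : F[X] :=
  f.sum fun i c => C c * (skewXMul σ δ)^[i] g

/-- The `(σ,δ)`-operator `D_a(b) = σ(b)a + δ(b)`. -/
def opD (σ : F →+* F) (δ : F → F) (a b : F) : F := σ b * a + δ b

/-- Generalized operator evaluation `f(b)_a = ∑ fᵢ D_a^i(b)`. -/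
def opEval (σ : F →+* F) (δ : F → F) (f : F[X]) (b a : F) : F :=
  f.sum fun i c => c * (opD σ δ a)^[i] b
namespace Aux

variable (σ : F →+* F)

local notation "δ0" => (fun _ : F => (0:F))

lemma opEval_add (p q : F[X]) (b a : F) :
    opEval σ δ0 (p + q) b a = opEval σ δ0 p b a + opEval σ δ0 q b a := by
  unfold opEval
  exact Polynomial.sum_add_index p q _ (fun i => zero_mul _) (fun i x y => add_mul x y _)

lemma opEval_monomial (n : ℕ) (c : F) (b a : F) :
    opEval σ δ0 (monomial n c) b a = c * (opD σ δ0 a)^[n] b := by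
  unfold opEval
  exact Polynomial.sum_monomial_index c _ (zero_mul _)

lemma opEval_C_mul (c : F) (p : F[X]) (b a : F) :
    opEval σ δ0 (C c * p) b a = c * opEval σ δ0 p b a := by
  unfold opEval
  rw [← smul_eq_C_mul, Polynomial.sum_smul_index p c (fun i x => x * (opD σ δ0 a)^[i] b) (fun i => zero_mul _)]
  simp [Polynomial.sum, Finset.mul_sum, mul_assoc]

lemma skewXMul_zero_deriv (p : F[X]) : skewXMul σ δ0 p = p.map σ * X := by
  simp [skewXMul, Polynomial.sum]

lemma opD_zero_deriv (a x : F) : opD σ δ0 a x = σ x * a := by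
  simp [opD]

lemma opEval_skewXMul (p : F[X]) (b a : F) :
    opEval σ δ0 (skewXMul σ δ0 p) b a = opD σ δ0 a (opEval σ δ0 p b a) := by
  induction p using Polynomial.induction_on' with
  | add f g hf hg =>
      have : skewXMul σ δ0 (f + g) = skewXMul σ δ0 f + skewXMul σ δ0 g := by
        simp [skewXMul_zero_deriv, Polynomial.map_add, add_mul]
      rw [this, opEval_add, hf, hg, opEval_add, opD_zero_deriv, opD_zero_deriv,
        opD_zero_deriv, map_add, add_mul]
  | monomial n c =>
      rw [skewXMul_zero_deriv]
      have h1 : (monomial n c : F[X]).map σ * X = monomial (n+1) (σ c) := by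
        simp [Polynomial.map_monomial, Polynomial.monomial_mul_X]
      rw [h1, opEval_monomial, opEval_monomial, opD_zero_deriv,
        Function.iterate_succ_apply', opD_zero_deriv, map_mul, mul_assoc]

lemma opEval_skewXMul_iter (p : F[X]) (n : ℕ) (b a : F) :
    opEval σ δ0 ((skewXMul σ δ0)^[n] p) b a = (opD σ δ0 a)^[n] (opEval σ δ0 p b a) := by
  induction n with
  | zero => rfl
  | succ n ih =>
      rw [Function.iterate_succ_apply', Function.iterate_succ_apply',
        opEval_skewXMul, ih]

lemma opEval_skewMul (g h : F[X]) (b a : F) :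
    opEval σ δ0 (skewMul σ δ0 g h) b a = opEval σ δ0 g (opEval σ δ0 h b a) a := by
  induction g using Polynomial.induction_on' with
  | add p q hp hq =>
      have : skewMul σ δ0 (p + q) h = skewMul σ δ0 p h + skewMul σ δ0 q h := by
        unfold skewMul
        exact Polynomial.sum_add_index p q _ (fun i => by simp) (fun i x y => by
          simp [add_mul])
      rw [this, opEval_add, hp, hq, opEval_add]
  | monomial n c =>
      have : skewMul σ δ0 (monomial n c) h = C c * (skewXMul σ δ0)^[n] h := by
        unfold skewMul
        exact Polynomial.sum_monomial_index c _ (by simp)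
      rw [this, opEval_C_mul, opEval_skewXMul_iter, opEval_monomial]

lemma opEval_at_zero (g : F[X]) (a : F) : opEval σ δ0 g 0 a = 0 := by
  unfold opEval
  refine Finset.sum_eq_zero fun i _ => ?_
  have hz : (opD σ δ0 a)^[i] 0 = 0 := Function.iterate_fixed (by simp [opD]) i
  simp [hz]

lemma opEval_C (v : F) (b a : F) : opEval σ δ0 (C v) b a = v * b := by
  rw [← Polynomial.monomial_zero_left, opEval_monomial]
  rfl

lemma opEval_X_sub_C (c b a : F) :
    opEval σ δ0 (X - C c) b a = σ b * a - c * b := by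
  have : (X - C c : F[X]) = monomial 1 1 + C (-c) := by
    simp [Polynomial.monomial_one_right_eq_X_pow, sub_eq_add_neg]
  rw [this, opEval_add, opEval_monomial, opEval_C]
  simp [opD, sub_eq_add_neg]

end Aux

/-- Connection between evaluation types (zero derivation): `f[D_a(b)·b⁻¹]·b = f(b)_a`,
where `f[c]` is the remainder of right division of `f` by `x − c` and `D_a(b) = σ(b)a`. -/
theorem remEval_opEval_connection {F : Type*} [Field F] [Fintype F] (σ : F ≃+* F)
    (f : F[X]) (a b : F) (hb : b ≠ 0)
    (g : F[X]) (v : F)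
    (h : f = skewMul σ.toRingHom (fun _ => 0) g (X - C (σ b * a * b⁻¹)) + C v) :
    v * b = opEval σ.toRingHom (fun _ => 0) f b a := by
  subst h
  rw [Aux.opEval_add, Aux.opEval_skewMul, Aux.opEval_C, Aux.opEval_X_sub_C]
  have : σ.toRingHom b * a - σ b * a * b⁻¹ * b = 0 := by
    field_simp
    exact mul_eq_zero_of_right a (sub_eq_zero.mpr rfl)
  rw [this, Aux.opEval_at_zero, zero_add]
end
end

section
/- If the rows b₀,…,b_s of a matrix B over F_{q^m}[x;σ,δ] have pairwise distinct w-pivot indices and each b_j is of minimal w-weighted degree in T_j = K ∩ S_j (where S_j is the set of vectors with w-pivot index j together with 0, and K is a left submodule of F_{q^m}[x;σ,δ]^{s+1}), then b₀,…,b_s form a basis of K; that is, every p ∈ K is a left F_{q^m}[x;σ,δ]-linear combination of b₀,…,b_s. -/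
open Polynomial

noncomputable section

variable {F : Type*} [Field F]

/-- The `w`-weighted degree of a vector of skew polynomials. -/
def wdeg {F : Type*} [Field F] {s : ℕ} (w : Fin (s + 1) → ℕ)
    (a : Fin (s + 1) → F[X]) : WithBot ℕ :=
  Finset.univ.sup fun j => (a j).degree + (w j : WithBot ℕ)

/-- `j` is the `w`-pivot index of `a`: the largest index attaining the `w`-weighted degree. -/
def IsWPivot {F : Type*} [Field F] {s : ℕ} (w : Fin (s + 1) → ℕ)
    (a : Fin (s + 1) → F[X]) (j : Fin (s + 1)) : Prop :=
  ((a j).degree + (w j : WithBot ℕ) = wdeg w a) ∧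
    ∀ j', ((a j').degree + (w j' : WithBot ℕ) = wdeg w a) → j' ≤ j

variable {σ : F →+* F} {δ : F → F}

lemma skewXMul_zero : skewXMul σ δ 0 = 0 := by
  simp [skewXMul]

lemma skewXMul_iter_zero (t : ℕ) : (skewXMul σ δ)^[t] 0 = 0 := by
  induction t with
  | zero => rfl
  | succ t ih => rw [Function.iterate_succ_apply, skewXMul_zero, ih]

lemma skewXMul_degree (hσ : Function.Injective σ) {f : F[X]} (hf : f ≠ 0) :
    degree (skewXMul σ δ f) = degree f + 1 ∧
      leadingCoeff (skewXMul σ δ f) = σ (leadingCoeff f) := by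
  have hmap : (f.map σ) ≠ 0 := by
    simpa [Polynomial.map_eq_zero_iff hσ] using hf
  have hdm : degree (f.map σ) = degree f := degree_map_eq_of_injective hσ f
  have hD : degree (f.sum fun n c => C (δ c) * X ^ n) ≤ degree f := by
    refine (degree_sum_le _ _).trans ?_
    refine Finset.sup_le fun n hn => ?_
    exact (degree_C_mul_X_pow_le _ _).trans (le_degree_of_mem_supp n hn)
  have hlt : degree (f.sum fun n c => C (δ c) * X ^ n) < degree (f.map σ * X) := by
    calc degree (f.sum fun n c => C (δ c) * X ^ n) ≤ degree (f.map σ) := hD.trans hdm.ge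
    _ < degree (f.map σ * X) := degree_lt_degree_mul_X hmap
  constructor
  · rw [skewXMul, degree_add_eq_left_of_degree_lt hlt, degree_mul, degree_X, hdm]
  · rw [skewXMul, add_comm, leadingCoeff_add_of_degree_lt hlt, leadingCoeff_mul,
      leadingCoeff_X, mul_one, leadingCoeff, natDegree_map_eq_of_injective hσ, coeff_map]
    rfl

lemma skewXMul_iter_degree (hσ : Function.Injective σ) {f : F[X]} (hf : f ≠ 0) (t : ℕ) :
    degree ((skewXMul σ δ)^[t] f) = degree f + t ∧
      leadingCoeff ((skewXMul σ δ)^[t] f) = (⇑σ)^[t] (leadingCoeff f) := by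
  induction t with
  | zero => simp
  | succ t ih =>
    have hne : (skewXMul σ δ)^[t] f ≠ 0 := by
      intro h
      rw [h] at ih
      simp only [degree_zero] at ih
      exact hf (by simpa [WithBot.add_eq_bot] using ih.1.symm)
    obtain ⟨h1, h2⟩ := skewXMul_degree (δ := δ) hσ hne
    rw [Function.iterate_succ_apply', h1, h2, ih.1, ih.2, Function.iterate_succ_apply']
    push_cast
    refine ⟨by ring_nf, rfl⟩

lemma skewMul_monomial (c : F) (t : ℕ) (g : F[X]) :
    skewMul σ δ (C c * X ^ t) g = C c * (skewXMul σ δ)^[t] g := by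
  rw [skewMul, C_mul_X_pow_eq_monomial, sum_monomial_index]
  simp

lemma skewMul_add_left (f₁ f₂ g : F[X]) :
    skewMul σ δ (f₁ + f₂) g = skewMul σ δ f₁ g + skewMul σ δ f₂ g := by
  unfold skewMul
  apply sum_add_index <;> simp [add_mul]

lemma skewMul_zero_left (g : F[X]) : skewMul σ δ 0 g = 0 := by
  simp [skewMul]

lemma le_wdeg {s : ℕ} (w : Fin (s + 1) → ℕ) (a : Fin (s + 1) → F[X]) (j : Fin (s + 1)) :
    (a j).degree + (w j : WithBot ℕ) ≤ wdeg w a :=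
  Finset.le_sup (f := fun j => (a j).degree + (w j : WithBot ℕ)) (Finset.mem_univ j)

lemma wdeg_ne_bot {s : ℕ} (w : Fin (s + 1) → ℕ) {a : Fin (s + 1) → F[X]} (h : a ≠ 0) :
    wdeg w a ≠ ⊥ := by
  obtain ⟨r, hr⟩ := Function.ne_iff.mp h
  intro hb
  have h1 := le_wdeg w a r
  rw [hb, le_bot_iff, WithBot.add_eq_bot] at h1
  rcases h1 with h1 | h1
  · exact hr (degree_eq_bot.mp h1)
  · exact WithBot.coe_ne_bot h1

lemma exists_pivot {s : ℕ} (w : Fin (s + 1) → ℕ) {a : Fin (s + 1) → F[X]} (h : a ≠ 0) :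
    ∃ j, IsWPivot w a j := by
  classical
  obtain ⟨j0, _, hj0⟩ := Finset.exists_mem_eq_sup Finset.univ
    (Finset.univ_nonempty) (fun j => (a j).degree + (w j : WithBot ℕ))
  set S : Finset (Fin (s + 1)) :=
    Finset.univ.filter fun j => (a j).degree + (w j : WithBot ℕ) = wdeg w a with hS
  have hSne : S.Nonempty := ⟨j0, Finset.mem_filter.mpr ⟨Finset.mem_univ _, by rw [wdeg, hj0]⟩⟩
  refine ⟨S.max' hSne, ?_, fun j' hj' => ?_⟩
  · have := S.max'_mem hSne
    simpa [hS] using this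
  · exact S.le_max' j' (by simp [hS, hj'])

lemma sigma_iter_ne_zero (σ : F ≃+* F) (t : ℕ) {x : F} (hx : x ≠ 0) : (⇑σ)^[t] x ≠ 0 := by
  induction t with
  | zero => exact hx
  | succ t ih =>
    rw [Function.iterate_succ_apply']
    simpa using ih

lemma main_aux {s : ℕ} (σ : F ≃+* F) (δ : F → F)
    (w : Fin (s + 1) → ℕ) (K : Set (Fin (s + 1) → F[X]))
    (hKadd : ∀ p q, p ∈ K → q ∈ K → p + q ∈ K)
    (hKsmul : ∀ (f : F[X]) (p), p ∈ K → (fun r => skewMul σ.toRingHom δ f (p r)) ∈ K)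
    (b : Fin (s + 1) → Fin (s + 1) → F[X])
    (hbK : ∀ j, b j ∈ K) (hbne : ∀ j, b j ≠ 0)
    (hpiv : ∀ j, IsWPivot w (b j) j)
    (hmin : ∀ j, ∀ p ∈ K, p ≠ 0 → IsWPivot w p j → wdeg w (b j) ≤ wdeg w p) :
    ∀ n : ℕ, ∀ p ∈ K, ∀ jp : Fin (s + 1), IsWPivot w p jp →
      (wdeg w p).unbotD 0 * (s + 1) + jp.val ≤ n →
      ∃ a : Fin (s + 1) → F[X],
        ∀ r, p r = ∑ j, skewMul σ.toRingHom δ (a j) (b j r) := by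
  intro n
  induction n using Nat.strong_induction_on with
  | _ n ih =>
  intro p hp j hjp hn
  by_cases hp0 : p = 0
  · exact ⟨0, fun r => by simp [hp0, skewMul_zero_left]⟩
  have hσi : Function.Injective (σ.toRingHom : F →+* F) := σ.injective
  have hwp_ne : wdeg w p ≠ ⊥ := wdeg_ne_bot w hp0
  have hwb_ne : wdeg w (b j) ≠ ⊥ := wdeg_ne_bot w (hbne j)
  have hpj_ne : p j ≠ 0 := by
    intro h
    apply hwp_ne
    rw [← hjp.1, h, degree_zero, WithBot.bot_add]
  have hbjj_ne : b j j ≠ 0 := by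
    intro h
    apply hwb_ne
    rw [← (hpiv j).1, h, degree_zero, WithBot.bot_add]
  have hminp : wdeg w (b j) ≤ wdeg w p := hmin j p hp hp0 hjp
  set Dp := (p j).natDegree with hDp
  set Db := (b j j).natDegree with hDb
  have hdegp : (p j).degree = (Dp : WithBot ℕ) := degree_eq_natDegree hpj_ne
  have hdegb : (b j j).degree = (Db : WithBot ℕ) := degree_eq_natDegree hbjj_ne
  have hDbDp : Db ≤ Dp := by
    have h1 : (Db : WithBot ℕ) + (w j : WithBot ℕ) ≤ (Dp : WithBot ℕ) + (w j : WithBot ℕ) := by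
      rw [← hdegb, ← hdegp, hjp.1, (hpiv j).1]; exact hminp
    have h2 : ((Db + w j : ℕ) : WithBot ℕ) ≤ ((Dp + w j : ℕ) : WithBot ℕ) := by
      push_cast; exact h1
    exact Nat.le_of_add_le_add_right (WithBot.coe_le_coe.mp h2)
  set t := Dp - Db with ht
  have htDb : Db + t = Dp := by omega
  set c : F := (p j).leadingCoeff * ((⇑σ)^[t] (b j j).leadingCoeff)⁻¹ with hc
  have hσt0 : (⇑σ)^[t] (b j j).leadingCoeff ≠ 0 :=
    sigma_iter_ne_zero σ t (leadingCoeff_ne_zero.mpr hbjj_ne)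
  have hc0 : c ≠ 0 := mul_ne_zero (leadingCoeff_ne_zero.mpr hpj_ne) (inv_ne_zero hσt0)
  set g : Fin (s + 1) → F[X] :=
    fun r => C c * (skewXMul σ.toRingHom δ)^[t] (b j r) with hgdef
  have hgmul : ∀ r, g r = skewMul σ.toRingHom δ (C c * X ^ t) (b j r) :=
    fun r => (skewMul_monomial c t (b j r)).symm
  -- degrees of g
  have hgj_deg : (g j).degree = (p j).degree := by
    have hiter := skewXMul_iter_degree (δ := δ) hσi hbjj_ne t
    rw [hgdef]
    simp only []
    rw [degree_mul, degree_C hc0, hiter.1, hdegb, hdegp, zero_add]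
    push_cast
    rw [← htDb]
    push_cast
    ring
  have hgj_lc : (g j).leadingCoeff = (p j).leadingCoeff := by
    have hiter := skewXMul_iter_degree (δ := δ) hσi hbjj_ne t
    rw [hgdef]
    simp only []
    rw [leadingCoeff_mul, leadingCoeff_C, hiter.2, hc]
    exact inv_mul_cancel_right₀ hσt0 _
  have hwgt : wdeg w (b j) + (t : WithBot ℕ) = wdeg w p := by
    rw [← (hpiv j).1, ← hjp.1, hdegb, hdegp]
    push_cast
    rw [← htDb]
    push_cast
    ring
  have hgle : ∀ r, (g r).degree + (w r : WithBot ℕ) ≤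
      ((b j r).degree + (w r : WithBot ℕ)) + (t : WithBot ℕ) := by
    intro r
    by_cases hbr : b j r = 0
    · simp [hgdef, hbr, skewXMul_iter_zero]
    · have hiter := skewXMul_iter_degree (δ := δ) hσi hbr t
      have : (g r).degree = (b j r).degree + t := by
        rw [hgdef]
        simp only []
        rw [degree_mul, degree_C hc0, hiter.1, zero_add]
      rw [this]
      exact le_of_eq (by ring)
  have hgwp : ∀ r, (g r).degree + (w r : WithBot ℕ) ≤ wdeg w p := by
    intro r
    refine (hgle r).trans ?_
    rw [← hwgt]
    exact add_le_add_left ((le_wdeg w (b j) r).trans_eq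
      (by rw [← (hpiv j).1, (hpiv j).1])) _
  have hgwp_lt : ∀ r, j < r → (g r).degree + (w r : WithBot ℕ) < wdeg w p := by
    intro r hr
    refine (hgle r).trans_lt ?_
    rw [← hwgt]
    refine WithBot.add_lt_add_right (WithBot.coe_ne_bot) ?_
    refine lt_of_le_of_ne (le_wdeg w (b j) r) fun h => ?_
    exact absurd ((hpiv j).2 r h) (not_le.mpr hr)
  -- the reduced vector
  set p' : Fin (s + 1) → F[X] :=
    p + fun r => skewMul σ.toRingHom δ (C (-c) * X ^ t) (b j r) with hp'def
  have hp'r : ∀ r, p' r = p r - g r := by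
    intro r
    rw [hp'def]
    simp only [Pi.add_apply]
    rw [skewMul_monomial, hgdef]
    simp only [map_neg, neg_mul]
    ring
  have hp'K : p' ∈ K := hKadd _ _ hp (hKsmul (C (-c) * X ^ t) (b j) (hbK j))
  have hp'j : (p' j).degree < (p j).degree := by
    rw [hp'r]
    exact degree_sub_lt hgj_deg.symm hpj_ne hgj_lc.symm
  have hple : ∀ r, (p' r).degree + (w r : WithBot ℕ) ≤ wdeg w p := by
    intro r
    have h1 : (p' r).degree ≤ max (p r).degree (g r).degree := by
      rw [hp'r]; exact (degree_sub_le _ _)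
    calc (p' r).degree + (w r : WithBot ℕ)
        ≤ max (p r).degree (g r).degree + (w r : WithBot ℕ) := add_le_add_left h1 _
      _ = max ((p r).degree + (w r : WithBot ℕ)) ((g r).degree + (w r : WithBot ℕ)) :=
          (max_add_add_right _ _ _).symm
      _ ≤ wdeg w p := max_le (le_wdeg w p r) (hgwp r)
  have hpstrict : ∀ r, j ≤ r → (p' r).degree + (w r : WithBot ℕ) < wdeg w p := by
    intro r hr
    rcases eq_or_lt_of_le hr with hr' | hr'
    · have h2 : (p' r).degree < (p r).degree := hr' ▸ hp'j
      calc (p' r).degree + (w r : WithBot ℕ)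
          < (p r).degree + (w r : WithBot ℕ) :=
            WithBot.add_lt_add_right WithBot.coe_ne_bot h2
        _ = wdeg w p := hr' ▸ hjp.1
    · have hpr : (p r).degree + (w r : WithBot ℕ) < wdeg w p := by
        refine lt_of_le_of_ne (le_wdeg w p r) fun h => ?_
        exact absurd (hjp.2 r h) (not_le.mpr hr')
      have h1 : (p' r).degree ≤ max (p r).degree (g r).degree := by
        rw [hp'r]; exact (degree_sub_le _ _)
      calc (p' r).degree + (w r : WithBot ℕ)
          ≤ max ((p r).degree + (w r : WithBot ℕ)) ((g r).degree + (w r : WithBot ℕ)) :=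
            (add_le_add_left h1 _).trans_eq (max_add_add_right _ _ _).symm
        _ < wdeg w p := max_lt hpr (hgwp_lt r hr')
  have hwp'le : wdeg w p' ≤ wdeg w p := Finset.sup_le fun r _ => hple r
  by_cases hp'0 : p' = 0
  · -- p = g
    refine ⟨fun i => if i = j then C c * X ^ t else 0, fun r => ?_⟩
    have hpr : p r = g r := by
      have := hp'r r
      rw [hp'0] at this
      simpa [sub_eq_zero] using this.symm
    rw [hpr, hgmul r]
    rw [Finset.sum_eq_single j]
    · simp
    · intro i _ hij
      simp [hij, skewMul_zero_left]
    · simp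
  · obtain ⟨j', hj'⟩ := exists_pivot w hp'0
    have hwp'ne : wdeg w p' ≠ ⊥ := wdeg_ne_bot w hp'0
    obtain ⟨N, hN⟩ := WithBot.ne_bot_iff_exists.mp hwp_ne
    obtain ⟨N', hN'⟩ := WithBot.ne_bot_iff_exists.mp hwp'ne
    have hmeas : (wdeg w p').unbotD 0 * (s + 1) + j'.val <
        (wdeg w p).unbotD 0 * (s + 1) + j.val := by
      rw [← hN, ← hN']
      simp only [WithBot.unbotD_coe]
      rcases lt_or_eq_of_le hwp'le with hlt | heq
      · have hNN : N' < N := by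
          rw [← hN, ← hN'] at hlt
          exact_mod_cast hlt
        have hj's : j'.val < s + 1 := j'.isLt
        calc N' * (s + 1) + j'.val < N' * (s + 1) + (s + 1) := by omega
          _ = (N' + 1) * (s + 1) := by ring
          _ ≤ N * (s + 1) := Nat.mul_le_mul_right _ hNN
          _ ≤ N * (s + 1) + j.val := Nat.le_add_right _ _
      · have hNN : N' = N := by
          rw [← hN, ← hN'] at heq
          exact_mod_cast heq
        have hj'j : j' < j := by
          by_contra hcon
          push_neg at hcon
          have := hpstrict j' hcon
          rw [← heq] at this
          exact absurd hj'.1 (ne_of_lt this)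
        rw [hNN]
        have := Fin.lt_iff_val_lt_val.mp hj'j
        omega
    obtain ⟨a', ha'⟩ := ih ((wdeg w p').unbotD 0 * (s + 1) + j'.val)
      (lt_of_lt_of_le hmeas hn) p' hp'K j' hj' le_rfl
    refine ⟨fun i => a' i + if i = j then C c * X ^ t else 0, fun r => ?_⟩
    have hpr : p r = p' r + g r := by
      rw [hp'r r]; ring
    rw [hpr, ha' r, hgmul r]
    rw [Finset.sum_congr rfl fun i _ => skewMul_add_left (a' i) _ (b i r),
      Finset.sum_add_distrib]
    congr 1
    rw [Finset.sum_eq_single j]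
    · simp
    · intro i _ hij
      simp [hij, skewMul_zero_left]
    · simp

/-- If the rows `b₀,…,b_s` have pairwise distinct `w`-pivot indices (row `bⱼ` having pivot
index `j`) and each `bⱼ` has minimal `w`-weighted degree among the nonzero elements of the
left submodule `K` with pivot index `j`, then every `p ∈ K` is a left skew-polynomial linear
combination of `b₀,…,b_s`. -/
theorem weak_popov_rows_generate {F : Type*} [Field F] [Fintype F] (σ : F ≃+* F) (δ : F → F)
    (hδadd : ∀ a b : F, δ (a + b) = δ a + δ b)
    (hδmul : ∀ a b : F, δ (a * b) = δ a * b + σ a * δ b)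
    (s : ℕ) (w : Fin (s + 1) → ℕ) (K : Set (Fin (s + 1) → F[X]))
    (hK0 : (0 : Fin (s + 1) → F[X]) ∈ K)
    (hKadd : ∀ p q, p ∈ K → q ∈ K → p + q ∈ K)
    (hKsmul : ∀ (f : F[X]) (p), p ∈ K → (fun r => skewMul σ.toRingHom δ f (p r)) ∈ K)
    (b : Fin (s + 1) → Fin (s + 1) → F[X])
    (hbK : ∀ j, b j ∈ K) (hbne : ∀ j, b j ≠ 0)
    (hpiv : ∀ j, IsWPivot w (b j) j)
    (hmin : ∀ j, ∀ p ∈ K, p ≠ 0 → IsWPivot w p j → wdeg w (b j) ≤ wdeg w p) :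
    ∀ p ∈ K, ∃ a : Fin (s + 1) → F[X],
      ∀ r, p r = ∑ j, skewMul σ.toRingHom δ (a j) (b j r) := by
  intro p hp
  by_cases hp0 : p = 0
  · exact ⟨0, fun r => by simp [hp0, skewMul_zero_left]⟩
  · obtain ⟨j, hj⟩ := exists_pivot w hp0
    exact main_aux σ δ w K hKadd hKsmul b hbK hbne hpiv hmin
      ((wdeg w p).unbotD 0 * (s + 1) + j.val) p hp j hj le_rfl
end
end
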